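/- Let n ≥ 1 and s > 0. Suppose u and v are complex-valued functions such that v(1/s,·) is a Schwartz function on ℝⁿ and u(s,x) = (is)^{-n/2} e^{i|x|²/(2s)} conj(v(1/s, x/s)) for all x ∈ ℝⁿ, where (is)^{-n/2} is taken with the principal branch of the complex power and conj denotes complex conjugation. Then ‖∇v(1/s,·)‖_{L²(ℝⁿ)} = ‖(x + is∇)u(s,·)‖_{L²(ℝⁿ)}, where (x + is∇)u denotes the ℂⁿ-valued function with k-th component xₖ u(s,x) + is ∂ₖu(s,x) and its L² norm is the square root of the sum over components of the squared L² norms. -/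

import Mathlib

open MeasureTheory Complex

lemma point_eq {n : ℕ} (s : ℝ) (hs : 0 < s) (V : SchwartzMap (EuclideanSpace ℝ (Fin n)) ℂ)
    (x : EuclideanSpace ℝ (Fin n)) (k : Fin n) :
    (x k : ℂ) * ((Complex.I * (s : ℂ)) ^ (-(n : ℂ) / 2) *
        Complex.exp (Complex.I * ((‖x‖ ^ 2 / (2 * s) : ℝ) : ℂ)) *
        (starRingEnd ℂ) (V ((1 / s) • x))) +
      Complex.I * (s : ℂ) *
        fderiv ℝ (fun y : EuclideanSpace ℝ (Fin n) =>
          (Complex.I * (s : ℂ)) ^ (-(n : ℂ) / 2) *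
          Complex.exp (Complex.I * ((‖y‖ ^ 2 / (2 * s) : ℝ) : ℂ)) *
          (starRingEnd ℂ) (V ((1 / s) • y))) x (EuclideanSpace.single k 1)
    = (Complex.I * (s : ℂ)) ^ (-(n : ℂ) / 2) *
        Complex.exp (Complex.I * ((‖x‖ ^ 2 / (2 * s) : ℝ) : ℂ)) *
        (Complex.I * (starRingEnd ℂ) (fderiv ℝ V ((1 / s) • x) (EuclideanSpace.single k 1))) := by
  have h1 : HasFDerivAt (fun y : EuclideanSpace ℝ (Fin n) => ‖y‖^2) (2 • innerSL ℝ x) x :=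
    (hasStrictFDerivAt_norm_sq x).hasFDerivAt
  have h2 : HasFDerivAt (fun y : EuclideanSpace ℝ (Fin n) => ‖y‖^2/(2*s))
      ((2*s)⁻¹ • (2 • innerSL ℝ x)) x := by
    simpa [div_eq_inv_mul] using h1.const_mul ((2*s)⁻¹)
  have h3 : HasFDerivAt (fun y : EuclideanSpace ℝ (Fin n) => ((‖y‖^2/(2*s) : ℝ) : ℂ))
      (Complex.ofRealCLM.comp ((2*s)⁻¹ • (2 • innerSL ℝ x))) x :=
    Complex.ofRealCLM.hasFDerivAt.comp x h2
  have h5 := (h3.const_mul Complex.I).cexp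
  have hL : HasFDerivAt (fun y : EuclideanSpace ℝ (Fin n) => (1/s : ℝ) • y)
      ((1/s : ℝ) • ContinuousLinearMap.id ℝ _) x := by
    exact (hasFDerivAt_id x).const_smul (1/s : ℝ)
  have hVd : HasFDerivAt V (fderiv ℝ V ((1/s) • x)) ((1/s) • x) :=
    (((V.smooth 1).differentiable (by simp)) ((1/s) • x)).hasFDerivAt
  have h8 := (Complex.conjCLE.hasFDerivAt).comp x (hVd.comp x hL)
  have h9 := (h5.mul h8).const_mul ((Complex.I * (s : ℂ)) ^ (-(n : ℂ) / 2))
  have h9' : HasFDerivAt (fun y : EuclideanSpace ℝ (Fin n) =>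
      (Complex.I * (s : ℂ)) ^ (-(n : ℂ) / 2) *
      (Complex.exp (Complex.I * ((‖y‖ ^ 2 / (2 * s) : ℝ) : ℂ)) *
      Complex.conjCLE (V ((1 / s) • y)))) _ x := h9
  rw [show (fun y : EuclideanSpace ℝ (Fin n) =>
      (Complex.I * (s : ℂ)) ^ (-(n : ℂ) / 2) *
      Complex.exp (Complex.I * ((‖y‖ ^ 2 / (2 * s) : ℝ) : ℂ)) *
      (starRingEnd ℂ) (V ((1 / s) • y))) = fun y =>
      (Complex.I * (s : ℂ)) ^ (-(n : ℂ) / 2) *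
      (Complex.exp (Complex.I * ((‖y‖ ^ 2 / (2 * s) : ℝ) : ℂ)) *
      Complex.conjCLE (V ((1 / s) • y))) from by funext y; simp [mul_assoc], h9'.fderiv]
  have hx : (inner ℝ x (EuclideanSpace.single k 1) : ℝ) = x k := by
    rw [EuclideanSpace.inner_single_right]; simp
  simp only [ContinuousLinearMap.add_apply, ContinuousLinearMap.smul_apply,
    ContinuousLinearMap.comp_apply, ContinuousLinearMap.coe_smul', Pi.smul_apply,
    ContinuousLinearMap.coe_id', id_eq, innerSL_apply_apply, hx, smul_eq_mul,
    Complex.ofRealCLM_apply, Complex.conjCLE_apply, _root_.map_smul,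
    Function.comp_apply, Complex.real_smul]
  push_cast
  simp only [ContinuousLinearEquiv.coe_coe, Complex.conjCLE_apply, map_mul, map_inv₀,
    Complex.conj_ofReal, ← Complex.ofReal_inv]
  have hs' : (s : ℂ) ≠ 0 := by exact_mod_cast hs.ne'
  field_simp
  ring_nf
  rw [Complex.I_sq]
  rw [map_inv₀, Complex.conj_ofReal]
  field_simp
  ring

theorem pseudoConformal_gradient_norm {n : ℕ} (hn : 1 ≤ n) (s : ℝ) (hs : 0 < s)
    (u v : ℝ → EuclideanSpace ℝ (Fin n) → ℂ)
    (V : SchwartzMap (EuclideanSpace ℝ (Fin n)) ℂ) (hV : ∀ x, v (1 / s) x = V x)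
    (htrans : ∀ x, u s x = (Complex.I * (s : ℂ)) ^ (-(n : ℂ) / 2) *
        Complex.exp (Complex.I * ((‖x‖ ^ 2 / (2 * s) : ℝ) : ℂ)) *
        (starRingEnd ℂ) (v (1 / s) ((1 / s) • x))) :
    Real.sqrt (∑ k : Fin n,
        ∫ x, ‖fderiv ℝ (v (1 / s)) x (EuclideanSpace.single k 1)‖ ^ 2)
      = Real.sqrt (∑ k : Fin n,
        ∫ x, ‖(x k : ℂ) * u s x +
          Complex.I * (s : ℂ) * fderiv ℝ (u s) x (EuclideanSpace.single k 1)‖ ^ 2) := by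
  have hveq : v (1 / s) = ⇑V := funext hV
  have hueq : u s = fun y : EuclideanSpace ℝ (Fin n) =>
      (Complex.I * (s : ℂ)) ^ (-(n : ℂ) / 2) *
      Complex.exp (Complex.I * ((‖y‖ ^ 2 / (2 * s) : ℝ) : ℂ)) *
      (starRingEnd ℂ) (V ((1 / s) • y)) := by
    funext y; rw [htrans y, hV]
  rw [hveq, hueq]
  congr 1
  refine Finset.sum_congr rfl fun k _ => ?_
  -- pointwise norm computation
  have habs : ∀ x : EuclideanSpace ℝ (Fin n),
      ‖(x k : ℂ) * ((Complex.I * (s : ℂ)) ^ (-(n : ℂ) / 2) *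
        Complex.exp (Complex.I * ((‖x‖ ^ 2 / (2 * s) : ℝ) : ℂ)) *
        (starRingEnd ℂ) (V ((1 / s) • x))) +
      Complex.I * (s : ℂ) *
        fderiv ℝ (fun y : EuclideanSpace ℝ (Fin n) =>
          (Complex.I * (s : ℂ)) ^ (-(n : ℂ) / 2) *
          Complex.exp (Complex.I * ((‖y‖ ^ 2 / (2 * s) : ℝ) : ℂ)) *
          (starRingEnd ℂ) (V ((1 / s) • y))) x (EuclideanSpace.single k 1)‖ ^ 2
      = s ^ (-(n : ℝ)) * ‖fderiv ℝ V ((1 / s) • x) (EuclideanSpace.single k 1)‖ ^ 2 := by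
    intro x
    rw [point_eq s hs V x k]
    have h0 : (Complex.I * (s : ℂ)) ≠ 0 := by
      simp [Complex.ext_iff, hs.ne']
    have habsc : ‖(Complex.I * (s : ℂ)) ^ (-(n : ℂ) / 2)‖ = s ^ (-(n : ℝ) / 2) := by
      rw [Complex.norm_cpow_of_ne_zero h0]
      rw [show (-(n : ℂ) / 2).im = 0 by simp, show (-(n : ℂ) / 2).re = -(n : ℝ) / 2 by simp]
      simp [Complex.norm_of_nonneg hs.le, norm_mul, Complex.norm_I, abs_of_pos hs]
    have hsq : (s ^ (-(n : ℝ) / 2)) ^ 2 = s ^ (-(n : ℝ)) := by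
      rw [← Real.rpow_natCast (s ^ (-(n : ℝ) / 2)) 2, ← Real.rpow_mul hs.le]
      norm_num
    have hexp : ‖Complex.exp (Complex.I * ((‖x‖ ^ 2 / (2 * s) : ℝ) : ℂ))‖ = 1 := by
      rw [Complex.norm_exp,
        show (Complex.I * ((‖x‖ ^ 2 / (2 * s) : ℝ) : ℂ)).re = 0 by simp [Complex.mul_re, Complex.div_im, Complex.div_re, ← Complex.ofReal_pow]]
      exact Real.exp_zero
    simp only [norm_mul, habsc, hexp, Complex.norm_I, Complex.norm_conj,
      mul_one, one_mul, mul_pow, hsq]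
  simp only [habs]
  rw [MeasureTheory.integral_const_mul]
  rw [MeasureTheory.Measure.integral_comp_smul_of_nonneg
    (μ := volume) (fun y => ‖fderiv ℝ V y (EuclideanSpace.single k 1)‖ ^ 2) (1 / s)
    (hR := by positivity)]
  rw [finrank_euclideanSpace_fin, smul_eq_mul, ← mul_assoc]
  have : s ^ (-(n : ℝ)) * ((1 / s) ^ n)⁻¹ = 1 := by
    rw [Real.rpow_neg hs.le, Real.rpow_natCast]
    field_simp
    rw [← mul_pow, mul_one_div_cancel hs.ne', one_pow]
  rw [this, one_mul]
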